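/- Let G be a finite simple graph without isolated vertices, let k ≥ 2 and m ≥ 1 be integers, and let u, v be two new vertices. Let G̃ be the graph obtained by taking, for each edge e = xy of G, m copies of the gadget F_k in which the vertices u, v, x, y of F_k are identified with u, v and the endpoints x, y of e respectively, all gadget copies being otherwise pairwise disjoint. Let ψ_1 be the coloring of G̃ with ψ_1(u) = 1, ψ_1(v) = 2, ψ_1(w) = 1 for every vertex w of G, and coloring the remaining vertices of each gadget copy according to ψ. Then ψ_1 is a proper 3-coloring of G̃, and for every vertex cover B of G, ψ_1 is the unique proper 3-coloring of G̃ that agrees with ψ_1 on B ∪ {u, v}. -/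
import Mathlib


/-- The inner (non-boundary) vertices of the gadget graph `F_k`, i.e. the vertices of
`F_k` other than `u`, `v`, `x`, `y`: the vertices `z_1, …, z_5` (`z j` models
`z_{j+1}`), their primed copies (`z' j`), the vertices `y_1, …, y_k` (`Y i` models
`y_{i+1}`) and the vertices `x_{1,i}` (`p i`), `x_{2,i}` (`q i`) for `1 ≤ i ≤ k−1`. -/
inductive FInner (k : ℕ) : Type
  | z : Fin 5 → FInner k
  | z' : Fin 5 → FInner k
  | Y : Fin k → FInner k
  | p : Fin (k - 1) → FInner k
  | q : Fin (k - 1) → FInner k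

/-- The edges of `F_k` joining two inner vertices: the triangles `{z₁,z₂,z₃}`,
`{z₄,z₂,z₃}`, the edge `z₅z₄`, their primed copies, and for `1 ≤ i ≤ k−1` the edges of
the triangles `{yᵢ, x_{1,i}, x_{2,i}}`, `{y_{i+1}, x_{1,i}, x_{2,i}}`. -/
def FInnerRel (k : ℕ) : FInner k → FInner k → Prop
  | .z i, .z j =>
      ((i : ℕ) = 0 ∧ (j : ℕ) = 1) ∨ ((i : ℕ) = 0 ∧ (j : ℕ) = 2) ∨
      ((i : ℕ) = 1 ∧ (j : ℕ) = 2) ∨ ((i : ℕ) = 3 ∧ (j : ℕ) = 1) ∨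
      ((i : ℕ) = 3 ∧ (j : ℕ) = 2) ∨ ((i : ℕ) = 4 ∧ (j : ℕ) = 3)
  | .z' i, .z' j =>
      ((i : ℕ) = 0 ∧ (j : ℕ) = 1) ∨ ((i : ℕ) = 0 ∧ (j : ℕ) = 2) ∨
      ((i : ℕ) = 1 ∧ (j : ℕ) = 2) ∨ ((i : ℕ) = 3 ∧ (j : ℕ) = 1) ∨
      ((i : ℕ) = 3 ∧ (j : ℕ) = 2) ∨ ((i : ℕ) = 4 ∧ (j : ℕ) = 3)
  | .Y i, .p j => (i : ℕ) = (j : ℕ) ∨ (i : ℕ) = (j : ℕ) + 1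
  | .Y i, .q j => (i : ℕ) = (j : ℕ) ∨ (i : ℕ) = (j : ℕ) + 1
  | .p i, .q j => (i : ℕ) = (j : ℕ)
  | _, _ => False

/-- Inner vertices of `F_k` adjacent to the boundary vertex `u`: `z₃, z₅, z'₃, z'₅`
and the vertices `x_{1,i}`. -/
def uSide (k : ℕ) : FInner k → Prop
  | .z j => (j : ℕ) = 2 ∨ (j : ℕ) = 4
  | .z' j => (j : ℕ) = 2 ∨ (j : ℕ) = 4
  | .p _ => True
  | _ => False

/-- Inner vertices of `F_k` adjacent to the boundary vertex `x`: `z₁, z'₄, z'₅, y_k`. -/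
def xSide (k : ℕ) : FInner k → Prop
  | .z j => (j : ℕ) = 0
  | .z' j => (j : ℕ) = 3 ∨ (j : ℕ) = 4
  | .Y i => (i : ℕ) = k - 1
  | _ => False

/-- Inner vertices of `F_k` adjacent to the boundary vertex `y`: `z'₁, z₄, z₅, y_k`. -/
def ySide (k : ℕ) : FInner k → Prop
  | .z' j => (j : ℕ) = 0
  | .z j => (j : ℕ) = 3 ∨ (j : ℕ) = 4
  | .Y i => (i : ℕ) = k - 1
  | _ => False

/-- Inner vertices of `F_k` adjacent to the boundary vertex `v`: `z₁, z'₁, y_k`. -/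
def vSide (k : ℕ) : FInner k → Prop
  | .z j => (j : ℕ) = 0
  | .z' j => (j : ℕ) = 0
  | .Y i => (i : ℕ) = k - 1
  | _ => False

/-- The edges of `G`, each recorded once as an ordered pair `(a, b)` with `a < b`. -/
def OEdge {V : Type*} [LinearOrder V] (G : SimpleGraph V) : Type _ :=
  {e : V × V // G.Adj e.1 e.2 ∧ e.1 < e.2}

/-- The vertices of the graph `G̃`: the vertices of `G` together with the two new
vertices `u` (`Sum.inl (Sum.inr false)`) and `v` (`Sum.inl (Sum.inr true)`), and, for
each edge `e` of `G` and each copy index `c : Fin m`, a disjoint copy of the inner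
vertices of the gadget `F_k`. -/
abbrev TVert {V : Type*} [LinearOrder V] (G : SimpleGraph V) (k m : ℕ) : Type _ :=
  (V ⊕ Bool) ⊕ (OEdge G × Fin m × FInner k)

/-- The edge relation of `G̃`: within each gadget copy the inner edges of `F_k`, and
each inner vertex is joined to `u`, `v` and to the endpoints `x, y` of the
corresponding edge of `G` exactly as in `F_k` (the endpoint `x` of `F_k` being
identified with the smaller endpoint of the edge, `y` with the larger one; the gadget
`F_k` is symmetric in `x` and `y`). -/
def TRel {V : Type*} [LinearOrder V] (G : SimpleGraph V) (k m : ℕ) :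
    TVert G k m → TVert G k m → Prop
  | Sum.inl (Sum.inl w), Sum.inr (e, _, i) =>
      (w = e.1.1 ∧ xSide k i) ∨ (w = e.1.2 ∧ ySide k i)
  | Sum.inl (Sum.inr false), Sum.inr (_, _, i) => uSide k i
  | Sum.inl (Sum.inr true), Sum.inr (_, _, i) => vSide k i
  | Sum.inr (e, c, i), Sum.inr (e', c', i') => e = e' ∧ c = c' ∧ FInnerRel k i i'
  | _, _ => False

/-- The graph `G̃` obtained by attaching, for every edge `e = xy` of `G`, `m` copies
of the gadget `F_k` along `u`, `v` and the endpoints `x`, `y` of `e`. -/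
def Tgraph {V : Type*} [LinearOrder V] (G : SimpleGraph V) (k m : ℕ) :
    SimpleGraph (TVert G k m) :=
  SimpleGraph.fromRel (TRel G k m)

/-- The coloring `ψ` on the inner vertices of `F_k` (colors `1, 2, 3` are modelled as
`0, 1, 2 : Fin 3`): `ψ(z₁) = ψ(z'₁) = ψ(z₄) = ψ(z'₄) = 3`,
`ψ(z₅) = ψ(z'₅) = ψ(z₃) = ψ(z'₃) = 2`, `ψ(z₂) = ψ(z'₂) = 1`, `ψ(yᵢ) = 3`,
`ψ(x_{1,i}) = 2`, `ψ(x_{2,i}) = 1`. -/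
def ψI (k : ℕ) : FInner k → Fin 3
  | .z j => ![2, 0, 1, 2, 1] j
  | .z' j => ![2, 0, 1, 2, 1] j
  | .Y _ => 2
  | .p _ => 1
  | .q _ => 0

/-- The coloring `ψ₁` of `G̃`: `ψ₁(u) = 1`, `ψ₁(v) = 2`, `ψ₁(w) = 1` for every vertex
`w` of `G`, and each gadget copy is colored according to `ψ`. -/
def ψT {V : Type*} [LinearOrder V] (G : SimpleGraph V) (k m : ℕ) :
    TVert G k m → Fin 3
  | Sum.inl (Sum.inl _) => 0
  | Sum.inl (Sum.inr false) => 0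
  | Sum.inl (Sum.inr true) => 1
  | Sum.inr (_, _, i) => ψI k i

private lemma f3a : ∀ a : Fin 3, a ≠ 0 → a ≠ 1 → a = 2 := by decide
private lemma f3b : ∀ a : Fin 3, a ≠ 0 → a ≠ 2 → a = 1 := by decide
private lemma f3c : ∀ a : Fin 3, a ≠ 1 → a ≠ 2 → a = 0 := by decide
private lemma tri3 : ∀ a b c t : Fin 3, a ≠ b ∧ a ≠ c ∧ b ≠ c ∧ t ≠ b ∧ t ≠ c → t = a := by
  decide
private lemma chain3 : ∀ a b p q : Fin 3, p ≠ q ∧ a ≠ p ∧ a ≠ q ∧ b ≠ p ∧ b ≠ q → a = b := by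
  decide

private lemma zz_ne : ∀ i j : Fin 5,
    (((i : ℕ) = 0 ∧ (j : ℕ) = 1) ∨ ((i : ℕ) = 0 ∧ (j : ℕ) = 2) ∨
      ((i : ℕ) = 1 ∧ (j : ℕ) = 2) ∨ ((i : ℕ) = 3 ∧ (j : ℕ) = 1) ∨
      ((i : ℕ) = 3 ∧ (j : ℕ) = 2) ∨ ((i : ℕ) = 4 ∧ (j : ℕ) = 3)) →
    (![2, 0, 1, 2, 1] : Fin 5 → Fin 3) i ≠ ![2, 0, 1, 2, 1] j := by decide

private lemma x_z : ∀ j : Fin 5, (j : ℕ) = 0 →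
    (0 : Fin 3) ≠ ![2, 0, 1, 2, 1] j := by decide
private lemma x_z' : ∀ j : Fin 5, ((j : ℕ) = 3 ∨ (j : ℕ) = 4) →
    (0 : Fin 3) ≠ ![2, 0, 1, 2, 1] j := by decide
private lemma u_z : ∀ j : Fin 5, ((j : ℕ) = 2 ∨ (j : ℕ) = 4) →
    (0 : Fin 3) ≠ ![2, 0, 1, 2, 1] j := by decide
private lemma v_z : ∀ j : Fin 5, (j : ℕ) = 0 →
    (1 : Fin 3) ≠ ![2, 0, 1, 2, 1] j := by decide

private lemma trel_ne {V : Type*} [LinearOrder V] {G : SimpleGraph V} {k m : ℕ}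
    (p q : TVert G k m) (h : TRel G k m p q) : ψT G k m p ≠ ψT G k m q := by
  obtain (w | b) | ⟨e, c, i⟩ := p
  · obtain (w' | b') | ⟨e', c', i'⟩ := q
    · exact h.elim
    · exact h.elim
    · -- w vs inner
      show (0 : Fin 3) ≠ ψI k i'
      rcases h with ⟨-, hs⟩ | ⟨-, hs⟩
      · cases i' with
        | z j => exact x_z j hs
        | z' j => exact x_z' j hs
        | Y i => exact (by decide : (0 : Fin 3) ≠ 2)
        | p j => exact hs.elim
        | q j => exact hs.elim
      · cases i' with
        | z j => exact x_z' j hs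
        | z' j => exact x_z j hs
        | Y i => exact (by decide : (0 : Fin 3) ≠ 2)
        | p j => exact hs.elim
        | q j => exact hs.elim
  · obtain (w' | b') | ⟨e', c', i'⟩ := q
    · cases b <;> exact h.elim
    · cases b <;> exact h.elim
    · cases b
      · show (0 : Fin 3) ≠ ψI k i'
        cases i' with
        | z j => exact u_z j h
        | z' j => exact u_z j h
        | Y i => exact h.elim
        | p j => exact (by decide : (0 : Fin 3) ≠ 1)
        | q j => exact h.elim
      · show (1 : Fin 3) ≠ ψI k i'
        cases i' with
        | z j => exact v_z j h
        | z' j => exact v_z j h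
        | Y i => exact (by decide : (1 : Fin 3) ≠ 2)
        | p j => exact h.elim
        | q j => exact h.elim
  · obtain (w' | b') | ⟨e', c', i'⟩ := q
    · exact h.elim
    · cases b' <;> exact h.elim
    · obtain ⟨-, -, hr⟩ := h
      show ψI k i ≠ ψI k i'
      cases i with
      | z j =>
        cases i' with
        | z j' => exact zz_ne j j' hr
        | z' j' => exact hr.elim
        | Y i' => exact hr.elim
        | p j' => exact hr.elim
        | q j' => exact hr.elim
      | z' j =>
        cases i' with
        | z j' => exact hr.elim
        | z' j' => exact zz_ne j j' hr
        | Y i' => exact hr.elim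
        | p j' => exact hr.elim
        | q j' => exact hr.elim
      | Y i =>
        cases i' with
        | z j' => exact hr.elim
        | z' j' => exact hr.elim
        | Y i' => exact hr.elim
        | p j' => exact (by decide : (2 : Fin 3) ≠ 1)
        | q j' => exact (by decide : (2 : Fin 3) ≠ 0)
      | p j =>
        cases i' with
        | z j' => exact hr.elim
        | z' j' => exact hr.elim
        | Y i' => exact hr.elim
        | p j' => exact hr.elim
        | q j' => exact (by decide : (1 : Fin 3) ≠ 0)
      | q j =>
        cases i' <;> exact hr.elim

private lemma gadget {V : Type*} [LinearOrder V] {G : SimpleGraph V} {k m : ℕ} (hk : 2 ≤ k)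
    (σ : TVert G k m → Fin 3)
    (hne : ∀ p q, p ≠ q → TRel G k m p q → σ p ≠ σ q)
    (hu : σ (Sum.inl (Sum.inr false)) = 0)
    (hv : σ (Sum.inl (Sum.inr true)) = 1)
    (e : OEdge G) (c : Fin m)
    (h0 : σ (Sum.inl (Sum.inl e.1.1)) = 0 ∨ σ (Sum.inl (Sum.inl e.1.2)) = 0) :
    σ (Sum.inl (Sum.inl e.1.1)) = 0 ∧ σ (Sum.inl (Sum.inl e.1.2)) = 0 ∧
      ∀ i, σ (Sum.inr (e, c, i)) = ψI k i := by
  have key : ∀ i i' : FInner k, i ≠ i' → FInnerRel k i i' →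
      σ (Sum.inr (e, c, i)) ≠ σ (Sum.inr (e, c, i')) := by
    intro i i' hii hr
    refine hne _ _ (fun hq => hii ?_) ⟨rfl, rfl, hr⟩
    simpa using hq
  have keyu : ∀ i, uSide k i → σ (Sum.inr (e, c, i)) ≠ 0 := by
    intro i h hc
    exact hne (Sum.inl (Sum.inr false)) (Sum.inr (e, c, i)) (by simp) h (hu.trans hc.symm)
  have keyv : ∀ i, vSide k i → σ (Sum.inr (e, c, i)) ≠ 1 := by
    intro i h hc
    exact hne (Sum.inl (Sum.inr true)) (Sum.inr (e, c, i)) (by simp) h (hv.trans hc.symm)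
  have keyx : ∀ i, xSide k i → σ (Sum.inl (Sum.inl e.1.1)) ≠ σ (Sum.inr (e, c, i)) := by
    intro i h
    exact hne _ _ (by simp) (Or.inl ⟨rfl, h⟩)
  have keyy : ∀ i, ySide k i → σ (Sum.inl (Sum.inl e.1.2)) ≠ σ (Sum.inr (e, c, i)) := by
    intro i h
    exact hne _ _ (by simp) (Or.inr ⟨rfl, h⟩)
  -- x = 0
  have hx : σ (Sum.inl (Sum.inl e.1.1)) = 0 := by
    rcases h0 with h | h
    · exact h
    · have hB0 : σ (Sum.inr (e, c, FInner.z' 0)) = 2 := by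
        refine f3a _ (fun hc => keyy (FInner.z' 0) rfl (h.trans hc.symm))
          (keyv (FInner.z' 0) rfl)
      have hB01 := key (.z' 0) (.z' 1) (by simp) (Or.inl ⟨rfl, rfl⟩)
      have hB02 := key (.z' 0) (.z' 2) (by simp) (Or.inr (Or.inl ⟨rfl, rfl⟩))
      have hB12 := key (.z' 1) (.z' 2) (by simp) (Or.inr (Or.inr (Or.inl ⟨rfl, rfl⟩)))
      have hB31 := key (.z' 3) (.z' 1) (by simp)
        (Or.inr (Or.inr (Or.inr (Or.inl ⟨rfl, rfl⟩))))
      have hB32 := key (.z' 3) (.z' 2) (by simp)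
        (Or.inr (Or.inr (Or.inr (Or.inr (Or.inl ⟨rfl, rfl⟩)))))
      have hB43 := key (.z' 4) (.z' 3) (by simp)
        (Or.inr (Or.inr (Or.inr (Or.inr (Or.inr ⟨rfl, rfl⟩)))))
      have hB3 : σ (Sum.inr (e, c, FInner.z' 3)) = 2 :=
        (tri3 _ _ _ _ ⟨hB01, hB02, hB12, hB31, hB32⟩).trans hB0
      have hB4 : σ (Sum.inr (e, c, FInner.z' 4)) = 1 :=
        f3b _ (keyu _ (Or.inr rfl)) (fun hc => hB43 (hc.trans hB3.symm))
      refine f3c _ ?_ ?_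
      · intro hc; exact keyx (.z' 4) (Or.inr rfl) (hc.trans hB4.symm)
      · intro hc; exact keyx (.z' 3) (Or.inl rfl) (hc.trans hB3.symm)
  -- now the main chain from x = 0
  have hA0 : σ (Sum.inr (e, c, FInner.z 0)) = 2 :=
    f3a _ (fun hc => keyx (FInner.z 0) rfl (hx.trans hc.symm)) (keyv (FInner.z 0) rfl)
  have hA01 := key (.z 0) (.z 1) (by simp) (Or.inl ⟨rfl, rfl⟩)
  have hA02 := key (.z 0) (.z 2) (by simp) (Or.inr (Or.inl ⟨rfl, rfl⟩))
  have hA12 := key (.z 1) (.z 2) (by simp) (Or.inr (Or.inr (Or.inl ⟨rfl, rfl⟩)))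
  have hA31 := key (.z 3) (.z 1) (by simp)
    (Or.inr (Or.inr (Or.inr (Or.inl ⟨rfl, rfl⟩))))
  have hA32 := key (.z 3) (.z 2) (by simp)
    (Or.inr (Or.inr (Or.inr (Or.inr (Or.inl ⟨rfl, rfl⟩)))))
  have hA43 := key (.z 4) (.z 3) (by simp)
    (Or.inr (Or.inr (Or.inr (Or.inr (Or.inr ⟨rfl, rfl⟩)))))
  have hA3 : σ (Sum.inr (e, c, FInner.z 3)) = 2 :=
    (tri3 _ _ _ _ ⟨hA01, hA02, hA12, hA31, hA32⟩).trans hA0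
  have hA4 : σ (Sum.inr (e, c, FInner.z 4)) = 1 :=
    f3b _ (keyu _ (Or.inr rfl)) (fun hc => hA43 (hc.trans hA3.symm))
  have hA2 : σ (Sum.inr (e, c, FInner.z 2)) = 1 :=
    f3b _ (keyu _ (Or.inl rfl)) (fun hc => hA02 (hA0.trans hc.symm))
  have hA1 : σ (Sum.inr (e, c, FInner.z 1)) = 0 :=
    f3c _ (fun hc => hA12 (hc.trans hA2.symm))
      (fun hc => hA01 (hA0.trans hc.symm))
  -- y = 0
  have hy : σ (Sum.inl (Sum.inl e.1.2)) = 0 := by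
    refine f3c _ ?_ ?_
    · intro hc; exact keyy (.z 4) (Or.inr rfl) (hc.trans hA4.symm)
    · intro hc; exact keyy (.z 3) (Or.inl rfl) (hc.trans hA3.symm)
  -- primed chain from y = 0
  have hB0 : σ (Sum.inr (e, c, FInner.z' 0)) = 2 :=
    f3a _ (fun hc => keyy (FInner.z' 0) rfl (hy.trans hc.symm)) (keyv (FInner.z' 0) rfl)
  have hB01 := key (.z' 0) (.z' 1) (by simp) (Or.inl ⟨rfl, rfl⟩)
  have hB02 := key (.z' 0) (.z' 2) (by simp) (Or.inr (Or.inl ⟨rfl, rfl⟩))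
  have hB12 := key (.z' 1) (.z' 2) (by simp) (Or.inr (Or.inr (Or.inl ⟨rfl, rfl⟩)))
  have hB31 := key (.z' 3) (.z' 1) (by simp)
    (Or.inr (Or.inr (Or.inr (Or.inl ⟨rfl, rfl⟩))))
  have hB32 := key (.z' 3) (.z' 2) (by simp)
    (Or.inr (Or.inr (Or.inr (Or.inr (Or.inl ⟨rfl, rfl⟩)))))
  have hB43 := key (.z' 4) (.z' 3) (by simp)
    (Or.inr (Or.inr (Or.inr (Or.inr (Or.inr ⟨rfl, rfl⟩)))))
  have hB3 : σ (Sum.inr (e, c, FInner.z' 3)) = 2 :=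
    (tri3 _ _ _ _ ⟨hB01, hB02, hB12, hB31, hB32⟩).trans hB0
  have hB4 : σ (Sum.inr (e, c, FInner.z' 4)) = 1 :=
    f3b _ (keyu _ (Or.inr rfl)) (fun hc => hB43 (hc.trans hB3.symm))
  have hB2 : σ (Sum.inr (e, c, FInner.z' 2)) = 1 :=
    f3b _ (keyu _ (Or.inl rfl)) (fun hc => hB02 (hB0.trans hc.symm))
  have hB1 : σ (Sum.inr (e, c, FInner.z' 1)) = 0 :=
    f3c _ (fun hc => hB12 (hc.trans hB2.symm))
      (fun hc => hB01 (hB0.trans hc.symm))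
  -- Y chain
  have hCeq : ∀ n (hn : n < k),
      σ (Sum.inr (e, c, FInner.Y ⟨n, hn⟩)) = σ (Sum.inr (e, c, FInner.Y ⟨0, by omega⟩)) := by
    intro n
    induction n with
    | zero => intro hn; rfl
    | succ n ih =>
      intro hn
      have hj : n < k - 1 := by omega
      have h1 := key (.Y ⟨n, by omega⟩) (.p ⟨n, hj⟩) (by simp) (Or.inl rfl)
      have h2 := key (.Y ⟨n, by omega⟩) (.q ⟨n, hj⟩) (by simp) (Or.inl rfl)
      have h3 := key (.Y ⟨n + 1, hn⟩) (.p ⟨n, hj⟩) (by simp) (Or.inr rfl)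
      have h4 := key (.Y ⟨n + 1, hn⟩) (.q ⟨n, hj⟩) (by simp) (Or.inr rfl)
      have h5 := key (.p ⟨n, hj⟩) (.q ⟨n, hj⟩) (by simp) rfl
      exact (chain3 _ _ _ _ ⟨h5, h3, h4, h1, h2⟩).trans (ih (by omega))
  have hYl : σ (Sum.inr (e, c, FInner.Y ⟨k - 1, by omega⟩)) = 2 :=
    f3a _ (fun hc => keyx (.Y ⟨k - 1, by omega⟩) rfl (hx.trans hc.symm))
      (keyv (.Y ⟨k - 1, by omega⟩) rfl)
  have hY0 : σ (Sum.inr (e, c, FInner.Y ⟨0, by omega⟩)) = 2 :=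
    (hCeq (k - 1) (by omega)).symm.trans hYl
  have hYall : ∀ i : Fin k, σ (Sum.inr (e, c, FInner.Y i)) = 2 := by
    intro i
    have := (hCeq i.1 i.2).trans hY0
    simpa using this
  have hPall : ∀ j : Fin (k - 1), σ (Sum.inr (e, c, FInner.p j)) = 1 := by
    intro j
    have hjk : (j : ℕ) < k := by omega
    have h1 := key (.Y ⟨j, hjk⟩) (.p j) (by simp) (Or.inl rfl)
    rw [hYall] at h1
    exact f3b _ (keyu _ trivial) (fun hc => h1 hc.symm)
  have hQall : ∀ j : Fin (k - 1), σ (Sum.inr (e, c, FInner.q j)) = 0 := by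
    intro j
    have hjk : (j : ℕ) < k := by omega
    have h1 := key (.Y ⟨j, hjk⟩) (.q j) (by simp) (Or.inl rfl)
    rw [hYall] at h1
    have h2 := key (.p j) (.q j) (by simp) rfl
    rw [hPall] at h2
    exact f3c _ (fun hc => h2 hc.symm) (fun hc => h1 hc.symm)
  refine ⟨hx, hy, ?_⟩
  intro i
  cases i with
  | z j =>
    fin_cases j
    · exact hA0
    · exact hA1
    · exact hA2
    · exact hA3
    · exact hA4
  | z' j =>
    fin_cases j
    · exact hB0
    · exact hB1
    · exact hB2
    · exact hB3
    · exact hB4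
  | Y i => exact hYall i
  | p j => exact hPall j
  | q j => exact hQall j

/-- Let `G` be a finite graph without isolated vertices, `k ≥ 2`, `m ≥ 1`, and let
`G̃` be obtained by attaching `m` copies of the gadget `F_k` to every edge of `G`.
Then `ψ₁` is a proper 3-coloring of `G̃`, and for every vertex cover `B` of `G`, `ψ₁`
is the unique proper 3-coloring of `G̃` agreeing with `ψ₁` on `B ∪ {u, v}`. -/
theorem stmt17 {V : Type*} [Fintype V] [LinearOrder V] (G : SimpleGraph V)
    (k m : ℕ) (hk : 2 ≤ k) (hm : 1 ≤ m)
    (hnoiso : ∀ a : V, ∃ b, G.Adj a b) :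
    (∀ p q, (Tgraph G k m).Adj p q → ψT G k m p ≠ ψT G k m q) ∧
    (∀ B : Set V, (∀ a b : V, G.Adj a b → a ∈ B ∨ b ∈ B) →
      ∀ σ : TVert G k m → Fin 3,
        (∀ p q, (Tgraph G k m).Adj p q → σ p ≠ σ q) →
        (∀ w ∈ B, σ (Sum.inl (Sum.inl w)) = ψT G k m (Sum.inl (Sum.inl w))) →
        σ (Sum.inl (Sum.inr false)) = ψT G k m (Sum.inl (Sum.inr false)) →
        σ (Sum.inl (Sum.inr true)) = ψT G k m (Sum.inl (Sum.inr true)) →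
        σ = ψT G k m) := by
  constructor
  · intro p q hpq
    rw [Tgraph, SimpleGraph.fromRel_adj] at hpq
    rcases hpq with ⟨hne, h | h⟩
    · exact trel_ne p q h
    · exact (trel_ne q p h).symm
  · intro B hB σ hσ hBσ hu hv
    have hne : ∀ p q, p ≠ q → TRel G k m p q → σ p ≠ σ q := by
      intro p q h ht
      exact hσ p q (by rw [Tgraph, SimpleGraph.fromRel_adj]; exact ⟨h, Or.inl ht⟩)
    have hV : ∀ w : V, σ (Sum.inl (Sum.inl w)) = 0 := by
      intro w
      obtain ⟨b, hab⟩ := hnoiso w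
      have hwb : w ≠ b := G.ne_of_adj hab
      have hcov : σ (Sum.inl (Sum.inl w)) = 0 ∨ σ (Sum.inl (Sum.inl b)) = 0 := by
        rcases hB w b hab with h | h
        · exact Or.inl (hBσ w h)
        · exact Or.inr (hBσ b h)
      rcases lt_or_gt_of_ne hwb with hlt | hlt
      · exact (gadget hk σ hne hu hv ⟨(w, b), hab, hlt⟩ ⟨0, hm⟩ hcov).1
      · exact (gadget hk σ hne hu hv ⟨(b, w), hab.symm, hlt⟩ ⟨0, hm⟩ hcov.symm).2.1
    funext p
    obtain (w | b) | ⟨e, c, i⟩ := p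
    · exact hV w
    · cases b
      · exact hu
      · exact hv
    · exact (gadget hk σ hne hu hv e c (Or.inl (hV _))).2.2 i
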